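/- arXiv:2005.00990 — 2 statements merged into one kernel-verified Lean document; each statement's English description precedes it below -/
import Mathlib

section
/- Let Δ be a length-preserving relation over a finite alphabet Σ and Init ⊆ Σ*. If there exist sets Inv ⊆ Σ* and Rank ⊆ Σ* × Σ* such that: (1) Init ⊆ Inv; (2) Inv is inductive under Δ; (3) Δ ∩ (Inv × Inv) ⊆ Rank; (4) Rank is transitive; (5) Rank is irreflexive; then there is no infinite Δ-run starting from any state in Init, i.e., the system terminates from Init. -/
/-- Soundness of the invariant/ranking proof rule for termination of
length-preserving systems. -/
theorem ranking_implies_termination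
    (A : Type) [Fintype A]
    (Δ : List A → List A → Prop)
    (hLP : ∀ u v, Δ u v → u.length = v.length)
    (Init : Set (List A))
    (Inv : Set (List A)) (Rank : List A → List A → Prop)
    (h1 : Init ⊆ Inv)
    (h2 : ∀ s ∈ Inv, ∀ s', Δ s s' → s' ∈ Inv)
    (h3 : ∀ s s', s ∈ Inv → s' ∈ Inv → Δ s s' → Rank s s')
    (h4 : ∀ x y z, Rank x y → Rank y z → Rank x z)
    (h5 : ∀ x, ¬ Rank x x) :
    ¬ ∃ f : ℕ → List A, f 0 ∈ Init ∧ ∀ i, Δ (f i) (f (i + 1)) := by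
  rintro ⟨f, hf0, hstep⟩
  -- all states are in Inv
  have hInv : ∀ i, f i ∈ Inv := by
    intro i
    induction i with
    | zero => exact h1 hf0
    | succ n ih => exact h2 _ ih _ (hstep n)
  -- all states have the length of f 0
  have hlen : ∀ i, (f i).length = (f 0).length := by
    intro i
    induction i with
    | zero => rfl
    | succ n ih => rw [← ih]; exact (hLP _ _ (hstep n)).symm
  -- Rank holds along the run
  have hRank : ∀ i j, i < j → Rank (f i) (f j) := by
    intro i j hij
    induction j with
    | zero => omega
    | succ n ih =>
      have hstepR : Rank (f n) (f (n + 1)) :=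
        h3 _ _ (hInv n) (hInv (n + 1)) (hstep n)
      rcases Nat.lt_succ_iff_lt_or_eq.mp hij with h | h
      · exact h4 _ _ _ (ih h) hstepR
      · subst h; exact hstepR
  -- map into vectors of fixed length: finitely many
  let g : ℕ → List.Vector A (f 0).length := fun i => ⟨f i, hlen i⟩
  have : ¬ Function.Injective g :=
    Finite.exists_ne_map_eq_of_infinite g |> fun ⟨i, j, hne, hgij⟩ hinj => hne (hinj hgij)
  rw [Function.not_injective_iff] at this
  obtain ⟨i, j, hgij, hne⟩ := this
  have hfij : f i = f j := congrArg Subtype.val hgij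
  rcases lt_or_gt_of_ne hne with h | h
  · exact h5 (f j) (hfij ▸ hRank i j h)
  · exact h5 (f i) (hfij ▸ hRank j i h)
end

section
/- Conversely to the ranking-based soundness: if a length-preserving relation Δ over a finite alphabet admits no infinite run from any state in Init, then there exist Inv and Rank satisfying the five verification conditions (Init ⊆ Inv; Inv inductive; Δ ∩ (Inv × Inv) ⊆ Rank; Rank transitive; Rank irreflexive). In particular one may take Inv to be the set of states reachable from Init and Rank the transitive closure of Δ restricted to Inv. -/
/-- Completeness of the invariant/ranking proof rule: a terminating
length-preserving system admits an invariant and ranking relation satisfying the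
five verification conditions; one may take `Inv` to be the reachable states and
`Rank` the transitive closure of `Δ` restricted to `Inv`. -/
theorem termination_implies_ranking
    (A : Type) [Fintype A]
    (Δ : List A → List A → Prop)
    (hLP : ∀ u v, Δ u v → u.length = v.length)
    (Init : Set (List A))
    (hTerm : ¬ ∃ f : ℕ → List A, f 0 ∈ Init ∧ ∀ i, Δ (f i) (f (i + 1))) :
    ∃ (Inv : Set (List A)) (Rank : List A → List A → Prop),
      Init ⊆ Inv ∧
      (∀ s ∈ Inv, ∀ s', Δ s s' → s' ∈ Inv) ∧
      (∀ s s', s ∈ Inv → s' ∈ Inv → Δ s s' → Rank s s') ∧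
      (∀ x y z, Rank x y → Rank y z → Rank x z) ∧
      (∀ x, ¬ Rank x x) ∧
      Inv = {t | ∃ s ∈ Init, Relation.ReflTransGen Δ s t} ∧
      Rank = Relation.TransGen (fun x y => Δ x y ∧ x ∈ Inv ∧ y ∈ Inv) := by
  classical
  set Inv : Set (List A) := {t | ∃ s ∈ Init, Relation.ReflTransGen Δ s t} with hInvDef
  set r : List A → List A → Prop := fun x y => Δ x y ∧ x ∈ Inv ∧ y ∈ Inv with hrDef
  refine ⟨Inv, Relation.TransGen r, ?_, ?_, ?_, ?_, ?_, rfl, rfl⟩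
  · intro s hs; exact ⟨s, hs, Relation.ReflTransGen.refl⟩
  · rintro s ⟨a, ha, hpath⟩ s' hΔ; exact ⟨a, ha, hpath.tail hΔ⟩
  · intro s s' hs hs' hΔ; exact Relation.TransGen.single ⟨hΔ, hs, hs'⟩
  · exact fun x y z hxy hyz => hxy.trans hyz
  · intro x hx
    obtain ⟨y, hxy, hyx⟩ := (Relation.TransGen.head'_iff).mp hx
    have hxInv : x ∈ Inv := hxy.2.1
    obtain ⟨s₀, hs₀, hreach⟩ := hxInv
    have hyxΔ : Relation.ReflTransGen Δ y x := Relation.ReflTransGen.mono (fun a b (h : r a b) => h.1) y x hyx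
    have step : ∀ s, Relation.ReflTransGen Δ s x →
        ∃ t, Δ s t ∧ Relation.ReflTransGen Δ t x := by
      intro s hs
      rcases hs.cases_head with rfl | ⟨t, hst, htx⟩
      · exact ⟨y, hxy.1, hyxΔ⟩
      · exact ⟨t, hst, htx⟩
    have step' : ∀ s : {s : List A // Relation.ReflTransGen Δ s x},
        ∃ t : {s : List A // Relation.ReflTransGen Δ s x}, Δ s.1 t.1 := by
      rintro ⟨s, hs⟩
      obtain ⟨t, h1, h2⟩ := step s hs
      exact ⟨⟨t, h2⟩, h1⟩
    choose g hg using step'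
    let F : ℕ → {s : List A // Relation.ReflTransGen Δ s x} :=
      fun n => Nat.rec ⟨s₀, hreach⟩ (fun _ p => g p) n
    exact hTerm ⟨fun n => (F n).1, hs₀, fun i => hg (F i)⟩
end
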